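/- arXiv:2605.30319 — 3 statements merged into one kernel-verified Lean document; each statement's English description precedes it below -/
import Mathlib

section
/- Row-wise tail error of low-rank approximation: let A ∈ ℝ^{n×m} have rank at most r with singular value decomposition A = Σ_{i=1}^r σ_i u_i v_iᵀ, σ_1 ≥ … ≥ σ_r, and let 0 ≤ s < r. Then ‖A_s − A‖_{2,∞} ≤ ( max_{s < i ≤ r} ‖u_i‖_∞ ) · √( Σ_{i=s+1}^r σ_i² ) ≤ √r · σ_{s+1} · max_{s < i ≤ r} ‖u_i‖_∞. -/
open MeasureTheory ProbabilityTheory Matrix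
open scoped BigOperators ENNReal

noncomputable section

namespace CausalPanel

/-- ℓ₂→ℓ₂ operator (spectral) norm of a real matrix. -/
def opNorm {α β : Type*} [Fintype α] [Fintype β] [DecidableEq β] (A : Matrix α β ℝ) : ℝ :=
  ‖LinearMap.toContinuousLinearMap (Matrix.toEuclideanLin A)‖

/-- Frobenius norm. -/
def frobNorm {α β : Type*} [Fintype α] [Fintype β] (A : Matrix α β ℝ) : ℝ :=
  Real.sqrt (∑ i, ∑ j, (A i j) ^ 2)

/-- Row-wise ℓ₂ norm `‖·‖_{2,∞}`. -/
def norm2Inf {α β : Type*} [Fintype α] [Fintype β] (A : Matrix α β ℝ) : ℝ :=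
  ⨆ i, Real.sqrt (∑ j, (A i j) ^ 2)

/-- Entrywise sup norm `‖·‖_∞`. -/
def entrySup {α β : Type*} [Fintype α] [Fintype β] (A : Matrix α β ℝ) : ℝ :=
  ⨆ i, ⨆ j, |A i j|

/-- Vector sup norm. -/
def vecSup {α : Type*} [Fintype α] (v : α → ℝ) : ℝ := ⨆ i, |v i|

/-- `sval A k` is the `k`-th largest singular value of `A` (1-indexed), via Courant–Fischer. -/
def sval {α β : Type*} [Fintype α] [Fintype β] [DecidableEq β] (A : Matrix α β ℝ) (k : ℕ) : ℝ :=
  sSup {t : ℝ | 0 ≤ t ∧ ∃ V : Submodule ℝ (EuclideanSpace ℝ β),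
    Module.finrank ℝ V = k ∧ ∀ x ∈ V, t * ‖x‖ ≤ ‖Matrix.toEuclideanLin A x‖}

/-- `s`-th singular value gap `δ_s = σ_s - σ_{s+1}`. -/
def svalGap {α β : Type*} [Fintype α] [Fintype β] [DecidableEq β] (A : Matrix α β ℝ) (s : ℕ) : ℝ :=
  sval A s - sval A (s + 1)

/-- Best rank-`s` approximation (a Frobenius-norm minimizer among matrices of rank ≤ `s`);
when `σ_s > σ_{s+1}` this is the truncated SVD. -/
def truncate {α β : Type*} [Fintype α] [Fintype β] [DecidableEq β] (A : Matrix α β ℝ) (s : ℕ) :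
    Matrix α β ℝ :=
  Classical.epsilon fun B : Matrix α β ℝ =>
    B.rank ≤ s ∧ ∀ C : Matrix α β ℝ, C.rank ≤ s → frobNorm (A - B) ≤ frobNorm (A - C)

/-- `(K, σ)`-bounded random matrix (entrywise moment conditions). -/
def KSigmaBounded {Ω : Type*} [MeasurableSpace Ω] (μm : Measure Ω) {α β : Type*}
    (E : Ω → α → β → ℝ) (K σ : ℝ) : Prop :=
  ∀ i j, (∫ ω, E ω i j ∂μm) = 0 ∧ (∫ ω, |E ω i j| ^ 2 ∂μm) ≤ σ ^ 2 ∧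
    ∀ ℓ : ℕ, 2 ≤ ℓ → (∫ ω, |E ω i j| ^ ℓ ∂μm) ≤ K ^ (ℓ - 2) * σ ^ 2

/-- Orthonormal family of vectors. -/
def OrthonormalFamily {ι α : Type*} [DecidableEq ι] [Fintype α] (u : ι → α → ℝ) : Prop :=
  ∀ i j, (∑ k, u i k * u j k) = if i = j then 1 else 0

/-- The symmetric dilation `[[0, A], [Aᵀ, 0]]`. -/
def dilation {α β : Type*} (A : Matrix α β ℝ) : Matrix (α ⊕ β) (α ⊕ β) ℝ :=
  Matrix.fromBlocks 0 A Aᵀ 0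

/-- Complexified symmetric dilation. -/
def cdilation {α β : Type*} (A : Matrix α β ℝ) : Matrix (α ⊕ β) (α ⊕ β) ℂ :=
  (dilation A).map fun x => (x : ℂ)

/-- Eigenvector `𝐮_{+i}` of the symmetric dilation. -/
def uplusVec {n m r : ℕ} (u : Fin r → Fin n → ℝ) (v : Fin r → Fin m → ℝ) (i : Fin r) :
    (Fin n ⊕ Fin m) → ℝ :=
  fun x => (Real.sqrt 2)⁻¹ * Sum.elim (u i) (v i) x

/-- Eigenvector `𝐮_{-i}` of the symmetric dilation. -/
def uminusVec {n m r : ℕ} (u : Fin r → Fin n → ℝ) (v : Fin r → Fin m → ℝ) (i : Fin r) :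
    (Fin n ⊕ Fin m) → ℝ :=
  fun x => (Real.sqrt 2)⁻¹ * Sum.elim (u i) (fun j => -(v i j)) x

/-- ℓ₂ norm of a complex vector. -/
def cvecNorm {α : Type*} [Fintype α] (w : α → ℂ) : ℝ :=
  Real.sqrt (∑ j, ‖w j‖ ^ 2)

/-- Arc-length integral of `f` along the segment from `w₁` to `w₂`. -/
def segInt (w₁ w₂ : ℂ) (f : ℂ → ℝ) : ℝ :=
  ‖w₂ - w₁‖ * ∫ t in (0:ℝ)..(1:ℝ), f (w₁ + (t : ℂ) * (w₂ - w₁))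

/-- Arc-length integral of `f` along the boundary of the rectangle `[x₁, x₂] × [-T, T] ⊆ ℂ`. -/
def rectInt (x₁ x₂ T : ℝ) (f : ℂ → ℝ) : ℝ :=
  segInt ((x₁ : ℂ) - T * Complex.I) ((x₂ : ℂ) - T * Complex.I) f +
  segInt ((x₂ : ℂ) - T * Complex.I) ((x₂ : ℂ) + T * Complex.I) f +
  segInt ((x₂ : ℂ) + T * Complex.I) ((x₁ : ℂ) + T * Complex.I) f +
  segInt ((x₁ : ℂ) + T * Complex.I) ((x₁ : ℂ) - T * Complex.I) f

/-- Arc-length integral along the contour `Γ = Γ⁺ ∪ Γ⁻`. -/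
def contourInt (σs δs σ1 : ℝ) (f : ℂ → ℝ) : ℝ :=
  rectInt (σs - δs / 2) (2 * σ1) (2 * σ1) f + rectInt (-(2 * σ1)) (-σs + δs / 2) (2 * σ1) f

/-- The matrix `P(z)` appearing in the contour expansion. -/
def Pres {n m r : ℕ} (σv : Fin r → ℝ) (u : Fin r → Fin n → ℝ) (v : Fin r → Fin m → ℝ) (z : ℂ) :
    Matrix (Fin n ⊕ Fin m) (Fin n ⊕ Fin m) ℂ :=
  (∑ i, ((σv i : ℂ) / ((z - σv i) * z)) •
      Matrix.vecMulVec (fun x => (uplusVec u v i x : ℂ)) (fun x => (uplusVec u v i x : ℂ))) -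
  (∑ i, ((σv i : ℂ) / ((z + σv i) * z)) •
      Matrix.vecMulVec (fun x => (uminusVec u v i x : ℂ)) (fun x => (uminusVec u v i x : ℂ)))

end CausalPanel

open CausalPanel in
/-- Row-wise tail error of low-rank approximation.
`σv i`, `u i`, `v i` are the `(i+1)`-st singular value/vectors (0-indexed `i : Fin r`),
so `σ_{s+1} = σv ⟨s, _⟩` and the tail indices `s < i ≤ r` are `{i : Fin r | s ≤ i.val}`. -/
theorem rowwise_tail_error_of_low_rank_approximation
    (n m r s : ℕ) (hs : s < r)
    (A : Matrix (Fin n) (Fin m) ℝ)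
    (σv : Fin r → ℝ) (u : Fin r → Fin n → ℝ) (v : Fin r → Fin m → ℝ)
    (hmono : ∀ i j : Fin r, i ≤ j → σv j ≤ σv i)
    (hnonneg : ∀ i, 0 ≤ σv i)
    (hu : OrthonormalFamily u) (hv : OrthonormalFamily v)
    (hA : A = ∑ i, σv i • Matrix.vecMulVec (u i) (v i))
    (As : Matrix (Fin n) (Fin m) ℝ)
    (hAs : As = ∑ i ∈ Finset.univ.filter (fun i : Fin r => (i : ℕ) < s),
      σv i • Matrix.vecMulVec (u i) (v i)) :
    norm2Inf (As - A) ≤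
        (⨆ i : {i : Fin r // s ≤ (i : ℕ)}, vecSup (u i)) *
          Real.sqrt (∑ i ∈ Finset.univ.filter (fun i : Fin r => s ≤ (i : ℕ)), σv i ^ 2) ∧
      (⨆ i : {i : Fin r // s ≤ (i : ℕ)}, vecSup (u i)) *
          Real.sqrt (∑ i ∈ Finset.univ.filter (fun i : Fin r => s ≤ (i : ℕ)), σv i ^ 2) ≤
        Real.sqrt r * σv ⟨s, hs⟩ * (⨆ i : {i : Fin r // s ≤ (i : ℕ)}, vecSup (u i)) := by
  classical
  set T : Finset (Fin r) := Finset.univ.filter (fun i : Fin r => s ≤ (i : ℕ)) with hT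
  set M : ℝ := ⨆ i : {i : Fin r // s ≤ (i : ℕ)}, vecSup (u i) with hM
  have hvecSup_nonneg : ∀ i : Fin r, 0 ≤ vecSup (u i) := by
    intro i
    exact Real.iSup_nonneg fun j => abs_nonneg _
  have hMnonneg : 0 ≤ M := by
    have : Nonempty {i : Fin r // s ≤ (i : ℕ)} := ⟨⟨⟨s, hs⟩, le_refl s⟩⟩
    exact Real.iSup_nonneg fun i => hvecSup_nonneg i
  have habs_le : ∀ (i : {i : Fin r // s ≤ (i : ℕ)}) (j : Fin n), |u i j| ≤ M := by
    intro i j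
    have h1 : |u i j| ≤ vecSup (u i) :=
      le_ciSup (f := fun k => |u (i : Fin r) k|) (Set.Finite.bddAbove (Set.finite_range _)) j
    have h2 : vecSup (u i) ≤ M :=
      le_ciSup (f := fun i : {i : Fin r // s ≤ (i : ℕ)} => vecSup (u i))
        (Set.Finite.bddAbove (Set.finite_range _)) i
    exact h1.trans h2
  -- entrywise formula for As - A
  have hentry : ∀ (j : Fin n) (k : Fin m),
      (As - A) j k = -(∑ i ∈ T, σv i * u i j * v i k) := by
    intro j k
    have hsplit : (∑ i ∈ Finset.univ.filter (fun i : Fin r => (i : ℕ) < s),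
          σv i * (u i j * v i k)) + (∑ i ∈ T, σv i * (u i j * v i k))
        = ∑ i : Fin r, σv i * (u i j * v i k) := by
      rw [hT]
      have : (Finset.univ.filter (fun i : Fin r => s ≤ (i : ℕ)))
          = Finset.univ.filter (fun i : Fin r => ¬ (i : ℕ) < s) := by
        apply Finset.filter_congr
        intro i _
        simp [not_lt]
      rw [this]
      exact Finset.sum_filter_add_sum_filter_not _ _ _
    have hAjk : A j k = ∑ i : Fin r, σv i * (u i j * v i k) := by
      rw [hA]
      simp [Matrix.sum_apply, Matrix.vecMulVec_apply]
    have hAsjk : As j k = ∑ i ∈ Finset.univ.filter (fun i : Fin r => (i : ℕ) < s),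
        σv i * (u i j * v i k) := by
      rw [hAs]
      simp [Matrix.sum_apply, Matrix.vecMulVec_apply]
    have : (As - A) j k = As j k - A j k := by simp [Matrix.sub_apply]
    rw [this, hAjk, hAsjk, ← hsplit]
    have h3 : ∑ i ∈ T, σv i * (u i j * v i k) = ∑ i ∈ T, σv i * u i j * v i k :=
      Finset.sum_congr rfl fun i _ => by ring
    rw [h3]
    ring
  -- row square-sum identity
  have hrow : ∀ j : Fin n, (∑ k, ((As - A) j k) ^ 2) = ∑ i ∈ T, (σv i * u i j) ^ 2 := by
    intro j
    have : (∑ k, ((As - A) j k) ^ 2)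
        = ∑ k, ∑ i ∈ T, ∑ i' ∈ T,
            ((σv i * u i j) * (σv i' * u i' j)) * (v i k * v i' k) := by
      apply Finset.sum_congr rfl
      intro k _
      rw [hentry j k, neg_sq, sq, Finset.sum_mul_sum]
      apply Finset.sum_congr rfl
      intro i _
      apply Finset.sum_congr rfl
      intro i' _
      ring
    rw [this, Finset.sum_comm]
    apply Finset.sum_congr rfl
    intro i hi
    rw [Finset.sum_comm]
    have : ∀ i' ∈ T, (∑ k, ((σv i * u i j) * (σv i' * u i' j)) * (v i k * v i' k))
        = ((σv i * u i j) * (σv i' * u i' j)) * (if i = i' then 1 else 0) := by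
      intro i' _
      rw [← hv i i', Finset.mul_sum]
    rw [Finset.sum_congr rfl this]
    simp only [mul_ite, mul_one, mul_zero]
    rw [Finset.sum_ite_eq T i (fun i' => (σv i * u i j) * (σv i' * u i' j))]
    simp only [hi, if_true]
    ring
  have hsum_nonneg : (0:ℝ) ≤ ∑ i ∈ T, σv i ^ 2 :=
    Finset.sum_nonneg fun i _ => sq_nonneg _
  -- first inequality
  have h1 : norm2Inf (As - A) ≤ M * Real.sqrt (∑ i ∈ T, σv i ^ 2) := by
    apply Real.iSup_le
    · intro j
      rw [hrow j]
      have hle : (∑ i ∈ T, (σv i * u i j) ^ 2) ≤ M ^ 2 * ∑ i ∈ T, σv i ^ 2 := by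
        rw [Finset.mul_sum]
        apply Finset.sum_le_sum
        intro i hi
        have hi' : s ≤ (i : ℕ) := by
          rw [hT] at hi; exact (Finset.mem_filter.mp hi).2
        have : |u i j| ≤ M := habs_le ⟨i, hi'⟩ j
        have h2 : (u i j) ^ 2 ≤ M ^ 2 := by
          rw [← sq_abs (u i j)]
          exact pow_le_pow_left₀ (abs_nonneg _) this 2
        calc (σv i * u i j) ^ 2 = σv i ^ 2 * (u i j) ^ 2 := by ring
          _ ≤ σv i ^ 2 * M ^ 2 := by
              exact mul_le_mul_of_nonneg_left h2 (sq_nonneg _)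
          _ = M ^ 2 * σv i ^ 2 := by ring
      calc Real.sqrt (∑ i ∈ T, (σv i * u i j) ^ 2)
          ≤ Real.sqrt (M ^ 2 * ∑ i ∈ T, σv i ^ 2) := Real.sqrt_le_sqrt hle
        _ = M * Real.sqrt (∑ i ∈ T, σv i ^ 2) := by
            rw [Real.sqrt_mul (sq_nonneg M), Real.sqrt_sq hMnonneg]
    · exact mul_nonneg hMnonneg (Real.sqrt_nonneg _)
  refine ⟨h1, ?_⟩
  -- second inequality
  have hσs : 0 ≤ σv ⟨s, hs⟩ := hnonneg _
  have hkey : Real.sqrt (∑ i ∈ T, σv i ^ 2) ≤ Real.sqrt r * σv ⟨s, hs⟩ := by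
    have hle : (∑ i ∈ T, σv i ^ 2) ≤ (r : ℝ) * σv ⟨s, hs⟩ ^ 2 := by
      calc (∑ i ∈ T, σv i ^ 2) ≤ ∑ _i ∈ T, σv ⟨s, hs⟩ ^ 2 := by
            apply Finset.sum_le_sum
            intro i hi
            have hi' : s ≤ (i : ℕ) := by
              rw [hT] at hi; exact (Finset.mem_filter.mp hi).2
            have : σv i ≤ σv ⟨s, hs⟩ := hmono ⟨s, hs⟩ i hi'
            exact pow_le_pow_left₀ (hnonneg i) this 2
        _ = (T.card : ℝ) * σv ⟨s, hs⟩ ^ 2 := by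
            rw [Finset.sum_const, nsmul_eq_mul]
        _ ≤ (r : ℝ) * σv ⟨s, hs⟩ ^ 2 := by
            apply mul_le_mul_of_nonneg_right _ (sq_nonneg _)
            have : T.card ≤ r := by
              calc T.card ≤ (Finset.univ : Finset (Fin r)).card :=
                    Finset.card_le_card (Finset.filter_subset _ _)
                _ = r := by simp
            exact_mod_cast this
    calc Real.sqrt (∑ i ∈ T, σv i ^ 2)
        ≤ Real.sqrt ((r : ℝ) * σv ⟨s, hs⟩ ^ 2) := Real.sqrt_le_sqrt hle
      _ = Real.sqrt r * σv ⟨s, hs⟩ := by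
          rw [Real.sqrt_mul (Nat.cast_nonneg r), Real.sqrt_sq hσs]
  calc M * Real.sqrt (∑ i ∈ T, σv i ^ 2)
      ≤ M * (Real.sqrt r * σv ⟨s, hs⟩) := mul_le_mul_of_nonneg_left hkey hMnonneg
    _ = Real.sqrt r * σv ⟨s, hs⟩ * M := by ring
end
end

section
/- Existence of a detectable singular gap: let A ∈ ℝ^{n×m} have rank at most r and let t > 0 satisfy σ_1(A) > 10·r·t. Let Ã ∈ ℝ^{n×m} satisfy ‖Ã − A‖_op ≤ t. Then there exists an index s with 1 ≤ s ≤ r such that σ_s(Ã) − σ_{s+1}(Ã) ≥ 8t, where σ_k(·) denotes the k-th largest singular value. -/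
open MeasureTheory ProbabilityTheory Matrix
open scoped BigOperators ENNReal

noncomputable section

namespace CausalPanel
noncomputable section
open Module
variable {α β : Type*} [Fintype α] [Fintype β] [DecidableEq β]

lemma norm_apply_le (A : Matrix α β ℝ) (x : EuclideanSpace ℝ β) :
    ‖Matrix.toEuclideanLin A x‖ ≤ opNorm A * ‖x‖ := by
  have := (LinearMap.toContinuousLinearMap (Matrix.toEuclideanLin A)).le_opNorm x
  simpa [opNorm] using this

lemma bddAbove_svalSet (A : Matrix α β ℝ) (k : ℕ) (hk : 1 ≤ k) :
    BddAbove {t : ℝ | 0 ≤ t ∧ ∃ V : Submodule ℝ (EuclideanSpace ℝ β),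
      Module.finrank ℝ V = k ∧ ∀ x ∈ V, t * ‖x‖ ≤ ‖Matrix.toEuclideanLin A x‖} := by
  refine ⟨opNorm A, ?_⟩
  rintro s ⟨hs0, V, hV, hineq⟩
  have hVne : V ≠ ⊥ := by
    intro h
    rw [h, finrank_bot] at hV
    omega
  obtain ⟨x, hxV, hx0⟩ := Submodule.exists_mem_ne_zero_of_ne_bot hVne
  have hx : (0:ℝ) < ‖x‖ := norm_pos_iff.2 hx0
  have h1 := hineq x hxV
  have h2 := norm_apply_le A x
  nlinarith

lemma sval_nonneg (A : Matrix α β ℝ) (k : ℕ) (hk : 1 ≤ k) : 0 ≤ sval A k := by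
  by_cases hne : {t : ℝ | 0 ≤ t ∧ ∃ V : Submodule ℝ (EuclideanSpace ℝ β),
      Module.finrank ℝ V = k ∧ ∀ x ∈ V, t * ‖x‖ ≤ ‖Matrix.toEuclideanLin A x‖}.Nonempty
  · obtain ⟨s, hs⟩ := hne
    exact hs.1.trans (le_csSup (bddAbove_svalSet A k hk) hs)
  · rw [sval, Set.not_nonempty_iff_eq_empty.1 hne, Real.sSup_empty]

lemma sval_weyl (A B : Matrix α β ℝ) (k : ℕ) (hk : 1 ≤ k) :
    sval A k ≤ sval B k + opNorm (B - A) := by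
  set e := opNorm (B - A) with he
  have he0 : 0 ≤ e := norm_nonneg _
  have hB0 : 0 ≤ sval B k := sval_nonneg B k hk
  by_cases hne : {t : ℝ | 0 ≤ t ∧ ∃ V : Submodule ℝ (EuclideanSpace ℝ β),
      Module.finrank ℝ V = k ∧ ∀ x ∈ V, t * ‖x‖ ≤ ‖Matrix.toEuclideanLin A x‖}.Nonempty
  · refine csSup_le hne ?_
    rintro s ⟨hs0, V, hV, hineq⟩
    rcases le_or_gt s e with h | h
    · linarith
    · have hmem : s - e ∈ {t : ℝ | 0 ≤ t ∧ ∃ V : Submodule ℝ (EuclideanSpace ℝ β),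
          Module.finrank ℝ V = k ∧ ∀ x ∈ V, t * ‖x‖ ≤ ‖Matrix.toEuclideanLin B x‖} := by
        refine ⟨by linarith, V, hV, fun x hx => ?_⟩
        have h1 := hineq x hx
        have h2 : ‖Matrix.toEuclideanLin A x - Matrix.toEuclideanLin B x‖ ≤ e * ‖x‖ := by
          have : Matrix.toEuclideanLin A x - Matrix.toEuclideanLin B x
              = - Matrix.toEuclideanLin (B - A) x := by
            rw [map_sub]; simp [LinearMap.sub_apply]
          rw [this, norm_neg]
          exact norm_apply_le _ x
        have h3 := norm_sub_norm_le (Matrix.toEuclideanLin A x) (Matrix.toEuclideanLin B x)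
        nlinarith
      have := le_csSup (bddAbove_svalSet B k hk) hmem
      rw [sval]; linarith
  · rw [sval, Set.not_nonempty_iff_eq_empty.1 hne, Real.sSup_empty]
    linarith

lemma sval_eq_zero_of_rank_le {r : ℕ} (A : Matrix α β ℝ) (hrank : A.rank ≤ r) :
    sval A (r + 1) = 0 := by
  have hsub : ∀ s ∈ {t : ℝ | 0 ≤ t ∧ ∃ V : Submodule ℝ (EuclideanSpace ℝ β),
      Module.finrank ℝ V = r + 1 ∧ ∀ x ∈ V, t * ‖x‖ ≤ ‖Matrix.toEuclideanLin A x‖},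
      s ≤ 0 := by
    rintro s ⟨hs0, V, hV, hineq⟩
    by_contra hpos
    push_neg at hpos
    -- restriction of toEuclideanLin A to V is injective
    set L := Matrix.toEuclideanLin A with hL
    have hker : LinearMap.ker (L.domRestrict V) = ⊥ := by
      rw [LinearMap.ker_eq_bot']
      rintro ⟨x, hxV⟩ hx
      have hx' : L x = 0 := by simpa using hx
      have := hineq x hxV
      rw [hx', norm_zero] at this
      have : ‖x‖ ≤ 0 := by nlinarith
      have hx0 : x = 0 := norm_le_zero_iff.1 this
      exact Subtype.ext hx0
    have hfr : finrank ℝ (LinearMap.range (L.domRestrict V)) = r + 1 := by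
      have := LinearMap.finrank_range_add_finrank_ker (L.domRestrict V)
      rw [hker, finrank_bot, add_zero] at this
      rw [this, hV]
    have hle : LinearMap.range (L.domRestrict V) ≤ LinearMap.range L := by
      rintro y ⟨⟨x, hx⟩, rfl⟩
      exact ⟨x, rfl⟩
    have hrangele : finrank ℝ (LinearMap.range (L.domRestrict V)) ≤
        finrank ℝ (LinearMap.range L) := Submodule.finrank_mono hle
    have hrankeq : A.rank = finrank ℝ (LinearMap.range L) := by
      rw [hL, Matrix.toEuclideanLin_eq_toLin_orthonormal]
      exact Matrix.rank_eq_finrank_range_toLin A _ _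
    omega
  by_cases hne : {t : ℝ | 0 ≤ t ∧ ∃ V : Submodule ℝ (EuclideanSpace ℝ β),
      Module.finrank ℝ V = r + 1 ∧ ∀ x ∈ V, t * ‖x‖ ≤ ‖Matrix.toEuclideanLin A x‖}.Nonempty
  · exact le_antisymm (csSup_le hne hsub) (sval_nonneg A (r+1) (by omega))
  · rw [sval, Set.not_nonempty_iff_eq_empty.1 hne, Real.sSup_empty]


lemma opNorm_sub_comm (A B : Matrix α β ℝ) : opNorm (A - B) = opNorm (B - A) := by
  rw [opNorm, opNorm, (neg_sub B A).symm, map_neg, map_neg, norm_neg]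

end
end CausalPanel



open CausalPanel in
/-- Existence of a detectable singular gap. -/
theorem exists_detectable_singular_gap
    (n m r : ℕ) (t : ℝ) (ht : 0 < t)
    (A At : Matrix (Fin n) (Fin m) ℝ)
    (hrank : A.rank ≤ r)
    (hσ1 : 10 * r * t < sval A 1)
    (hpert : opNorm (At - A) ≤ t) :
    ∃ s : ℕ, 1 ≤ s ∧ s ≤ r ∧ 8 * t ≤ sval At s - sval At (s + 1) := by
  have topos : (0:ℝ) < t := ht
  have hr1 : 1 ≤ r := by
    by_contra h
    push_neg at h
    interval_cases r
    · have h0 : sval A 1 = 0 := CausalPanel.sval_eq_zero_of_rank_le A hrank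
      rw [h0] at hσ1
      norm_num at hσ1
  have hW1 : sval A 1 ≤ sval At 1 + opNorm (At - A) := CausalPanel.sval_weyl A At 1 le_rfl
  have hW2 : sval At (r+1) ≤ sval A (r+1) + opNorm (A - At) :=
    CausalPanel.sval_weyl At A (r+1) (by omega)
  rw [CausalPanel.sval_eq_zero_of_rank_le A hrank, zero_add,
    CausalPanel.opNorm_sub_comm] at hW2
  set f : ℕ → ℝ := fun i => sval At (i + 1) with hf
  have htel : ∑ i ∈ Finset.range r, (f i - f (i + 1)) = f 0 - f r :=
    Finset.sum_range_sub' f r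
  have hrge : (1:ℝ) ≤ (r:ℝ) := by exact_mod_cast hr1
  have hsum : ∑ i ∈ Finset.range r, (8 * t) < ∑ i ∈ Finset.range r, (f i - f (i + 1)) := by
    rw [htel, Finset.sum_const, Finset.card_range, nsmul_eq_mul]
    have hft : f 0 - f r ≥ (sval A 1 - t) - t := by
      simp only [hf]
      have h2 : sval At (r + 1) ≤ t := le_trans hW2 hpert
      have h1 : sval A 1 - t ≤ sval At 1 := by linarith
      linarith
    nlinarith
  obtain ⟨i, hi, hgap⟩ := Finset.exists_lt_of_sum_lt hsum
  refine ⟨i + 1, by omega, by simpa using Finset.mem_range.1 hi, ?_⟩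
  simpa [hf] using hgap.le
end
end

section
/- Spectral bound at the selected truncation level: let A ∈ ℝ^{n×m} have rank at most r, let Ã ∈ ℝ^{n×m}, and let t ≥ ‖Ã − A‖_op. Suppose the set S := { s : 1 ≤ s ≤ r and σ_s(Ã) − σ_{s+1}(Ã) ≥ 8t } is nonempty, and let s := max S. Then σ_{s+1}(A) ≤ 10·r·t, where σ_k(·) denotes the k-th largest singular value. -/
open MeasureTheory ProbabilityTheory Matrix
open scoped BigOperators ENNReal

noncomputable section

open CausalPanel

namespace SpecAux

variable {α β : Type*} [Fintype α] [Fintype β] [DecidableEq β]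

private def svset (A : Matrix α β ℝ) (k : ℕ) : Set ℝ :=
  {t : ℝ | 0 ≤ t ∧ ∃ V : Submodule ℝ (EuclideanSpace ℝ β),
    Module.finrank ℝ V = k ∧ ∀ x ∈ V, t * ‖x‖ ≤ ‖Matrix.toEuclideanLin A x‖}

private lemma sval_eq (A : Matrix α β ℝ) (k : ℕ) : sval A k = sSup (svset A k) := rfl

private lemma sval_nonneg (A : Matrix α β ℝ) (k : ℕ) : 0 ≤ sval A k :=
  Real.sSup_nonneg (fun _ hx => hx.1)

private lemma mem_le_opNorm (A : Matrix α β ℝ) (k : ℕ) (hk : 1 ≤ k) {u : ℝ}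
    (hu : u ∈ svset A k) : u ≤ opNorm A := by
  obtain ⟨hu0, V, hV, hall⟩ := hu
  have hVpos : V ≠ ⊥ := by
    intro h
    rw [h] at hV
    simp at hV
    omega
  obtain ⟨x, hxV, hx0⟩ := Submodule.exists_mem_ne_zero_of_ne_bot hVpos
  have h1 : u * ‖x‖ ≤ ‖Matrix.toEuclideanLin A x‖ := hall x hxV
  have h2 : ‖Matrix.toEuclideanLin A x‖ ≤ opNorm A * ‖x‖ := by
    have := (LinearMap.toContinuousLinearMap (Matrix.toEuclideanLin A)).le_opNorm x
    simpa [opNorm] using this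
  have hx : (0:ℝ) < ‖x‖ := norm_pos_iff.mpr hx0
  nlinarith

private lemma bdd (A : Matrix α β ℝ) (k : ℕ) (hk : 1 ≤ k) : BddAbove (svset A k) :=
  ⟨opNorm A, fun _ hu => mem_le_opNorm A k hk hu⟩

private lemma weyl (A B : Matrix α β ℝ) (k : ℕ) (hk : 1 ≤ k) :
    sval B k ≤ sval A k + opNorm (B - A) := by
  set ε := opNorm (B - A) with hε
  have hε0 : 0 ≤ ε := norm_nonneg _
  rw [sval_eq]
  apply Real.sSup_le _ (by have := sval_nonneg A k; linarith)
  rintro u ⟨hu0, V, hV, hall⟩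
  rcases le_or_gt u ε with h | h
  · linarith [sval_nonneg A k]
  · have hmem : u - ε ∈ svset A k := by
      refine ⟨by linarith, V, hV, fun x hx => ?_⟩
      have h1 : u * ‖x‖ ≤ ‖Matrix.toEuclideanLin B x‖ := hall x hx
      have h2 : ‖Matrix.toEuclideanLin (B - A) x‖ ≤ ε * ‖x‖ := by
        have h := (LinearMap.toContinuousLinearMap (Matrix.toEuclideanLin (B - A))).le_opNorm x
        rw [hε]
        simpa only [opNorm, LinearMap.coe_toContinuousLinearMap'] using h
      have h3 : Matrix.toEuclideanLin (B - A) x =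
          Matrix.toEuclideanLin B x - Matrix.toEuclideanLin A x := by
        rw [map_sub]; rfl
      have h4 : ‖Matrix.toEuclideanLin B x‖ - ‖Matrix.toEuclideanLin A x‖ ≤ ε * ‖x‖ := by
        calc ‖Matrix.toEuclideanLin B x‖ - ‖Matrix.toEuclideanLin A x‖
            ≤ ‖Matrix.toEuclideanLin B x - Matrix.toEuclideanLin A x‖ := by
              exact norm_sub_norm_le _ _
          _ ≤ ε * ‖x‖ := by rw [← h3]; exact h2
      nlinarith [norm_nonneg x]
    have := le_csSup (bdd A k hk) hmem
    rw [← sval_eq] at this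
    linarith

private lemma sval_rank_le (A : Matrix α β ℝ) (r : ℕ) (hrank : A.rank ≤ r) :
    sval A (r + 1) = 0 := by
  refine le_antisymm ?_ (sval_nonneg A (r + 1))
  rw [sval_eq]
  apply Real.sSup_le _ le_rfl
  rintro u ⟨hu0, V, hV, hall⟩
  by_contra hcon
  push_neg at hcon
  set L := Matrix.toEuclideanLin A with hL
  set K := LinearMap.ker L with hK
  have hrange : Module.finrank ℝ (LinearMap.range L) = A.rank := by
    rw [hL, Matrix.toEuclideanLin_eq_toLin]
    exact (Matrix.rank_eq_finrank_range_toLin A _ _).symm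
  have hdim : Module.finrank ℝ (EuclideanSpace ℝ β) = Fintype.card β :=
    finrank_euclideanSpace
  have hrn : Module.finrank ℝ (LinearMap.range L) + Module.finrank ℝ K =
      Fintype.card β := by
    rw [← hdim]; exact LinearMap.finrank_range_add_finrank_ker L
  have hsup : Module.finrank ℝ ↥(V ⊔ K) ≤ Fintype.card β := by
    rw [← hdim]; exact Submodule.finrank_le _
  have hinf := Submodule.finrank_sup_add_finrank_inf_eq V K
  have hpos : 0 < Module.finrank ℝ ↥(V ⊓ K) := by omega
  obtain ⟨⟨x, hxmem⟩, hx0⟩ := Module.finrank_pos_iff_exists_ne_zero.mp hpos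
  have hxV : x ∈ V := hxmem.1
  have hxK : L x = 0 := hxmem.2
  have hxne : x ≠ 0 := by
    intro h
    apply hx0
    apply Subtype.ext
    simpa using h
  have h5 := hall x hxV
  rw [hxK] at h5
  simp at h5
  have h6 : (0:ℝ) < ‖x‖ := norm_pos_iff.mpr hxne
  nlinarith

end SpecAux


open CausalPanel in
/-- Spectral bound at the selected truncation level. -/
theorem spectral_bound_at_selected_truncation_level
    (n m r : ℕ) (t : ℝ)
    (A At : Matrix (Fin n) (Fin m) ℝ)
    (hrank : A.rank ≤ r)
    (ht : opNorm (At - A) ≤ t)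
    (S : Finset ℕ)
    (hS : S = (Finset.Icc 1 r).filter (fun s => 8 * t ≤ sval At s - sval At (s + 1)))
    (hne : S.Nonempty)
    (s : ℕ) (hs : s = S.max' hne) :
    sval A (s + 1) ≤ 10 * r * t := by
  have ht0 : (0:ℝ) ≤ t := le_trans (norm_nonneg _) ht
  have hsmem : s ∈ S := hs ▸ S.max'_mem hne
  rw [hS, Finset.mem_filter, Finset.mem_Icc] at hsmem
  obtain ⟨⟨hs1, hsr⟩, _⟩ := hsmem
  have hmax : ∀ j, s < j → j ≤ r → sval At j - sval At (j + 1) < 8 * t := by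
    intro j hj hjr
    by_contra h
    push_neg at h
    have hjS : j ∈ S := by
      rw [hS, Finset.mem_filter, Finset.mem_Icc]
      exact ⟨⟨by omega, hjr⟩, h⟩
    have hle := Finset.le_max' S j hjS
    rw [← hs] at hle
    omega
  have tele : ∀ d : ℕ, s + 1 + d ≤ r + 1 →
      sval At (s + 1) ≤ sval At (s + 1 + d) + 8 * t * d := by
    intro d
    induction d with
    | zero => intro _; simp
    | succ d ih =>
      intro hd
      have h1 := ih (by omega)
      have h2 := hmax (s + 1 + d) (by omega) (by omega)
      have he : s + 1 + (d + 1) = (s + 1 + d) + 1 := rfl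
      rw [he]
      push_cast
      linarith
  have htel := tele (r - s) (by omega)
  have hre : s + 1 + (r - s) = r + 1 := by omega
  rw [hre] at htel
  have hw1 : sval A (s + 1) ≤ sval At (s + 1) + opNorm (A - At) :=
    SpecAux.weyl At A (s + 1) (by omega)
  have hw2 : sval At (r + 1) ≤ sval A (r + 1) + opNorm (At - A) :=
    SpecAux.weyl A At (r + 1) (by omega)
  have hz : sval A (r + 1) = 0 := SpecAux.sval_rank_le A r hrank
  have hop : opNorm (A - At) = opNorm (At - A) := by
    unfold CausalPanel.opNorm
    rw [← neg_sub At A, map_neg, map_neg, norm_neg]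
  have hcast : ((r - s : ℕ) : ℝ) = (r : ℝ) - (s : ℝ) := by
    push_cast [Nat.cast_sub hsr]
    ring
  rw [hcast] at htel
  have hs1' : (1:ℝ) ≤ (s:ℝ) := by exact_mod_cast hs1
  have hsr' : (s:ℝ) ≤ (r:ℝ) := by exact_mod_cast hsr
  rw [hop] at hw1
  nlinarith [mul_nonneg ht0 (Nat.cast_nonneg r : (0:ℝ) ≤ (r:ℝ)), mul_le_mul_of_nonneg_left hs1' ht0]
end
end
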